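/- Let (π_1,…,π_n) and (π̄_1,…,π̄_n) be nonnegative vectors with ∑_i π_i = ∑_i π̄_i = 1, sorted so that the likelihood ratios η_i = π_i/π̄_i (with the convention η_i = ∞ if π̄_i = 0 < π_i) are non-increasing: η_1 ≥ η_2 ≥ … ≥ η_n. For p ∈ [0,1], let H* be the least index H with ∑_{i=1}^H π_i ≥ p. Then the minimum of ∑_i π̄_i g(i) over all g : {1,…,n} → [0,1] satisfying ∑_i π_i g(i) = p equals ∑_{i=1}^{H*−1} π̄_i + (p − ∑_{i=1}^{H*−1} π_i)/η_{H*}, attained by g*(i) = 1 for i < H*, g*(H*) = (p − ∑_{i<H*} π_i)/π_{H*}, and g*(i) = 0 for i > H*. -/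

import Mathlib

/-- Finite Neyman–Pearson lemma (Lemma 1 of the paper): the worst-case
smoothed probability at `x̄` given probability `p` at `x`, over constant
likelihood-ratio regions with probabilities `π` (under `φ(x)`) and `π̄`
(under `φ(x̄)`), sorted by non-increasing likelihood ratio. -/
theorem stmt_4 (n : ℕ) (hn : 1 ≤ n) (π πb : ℕ → ℝ)
    (hπ0 : ∀ i < n, 0 ≤ π i) (hπb0 : ∀ i < n, 0 ≤ πb i)
    (hπ1 : ∑ i ∈ Finset.range n, π i = 1)
    (hπb1 : ∑ i ∈ Finset.range n, πb i = 1)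
    -- likelihood ratios `π i / πb i` are non-increasing (cross-multiplied form,
    -- valid under the convention `η i = ∞` when `πb i = 0 < π i`):
    (hsorted : ∀ i j, i < n → j < n → i ≤ j → π j * πb i ≤ π i * πb j)
    (p : ℝ) (hp : p ∈ Set.Icc (0 : ℝ) 1)
    (H : ℕ) (hH1 : 1 ≤ H) (hHn : H ≤ n)
    (hHge : p ≤ ∑ i ∈ Finset.range H, π i)
    (hHleast : ∀ H', 1 ≤ H' → H' < H → ∑ i ∈ Finset.range H', π i < p) :
    IsLeast
      {s : ℝ | ∃ g : ℕ → ℝ, (∀ i < n, g i ∈ Set.Icc (0 : ℝ) 1) ∧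
        (∑ i ∈ Finset.range n, π i * g i) = p ∧
        s = ∑ i ∈ Finset.range n, πb i * g i}
      (∑ i ∈ Finset.range (H - 1), πb i
        + (p - ∑ i ∈ Finset.range (H - 1), π i) * πb (H - 1) / π (H - 1)) := by
  obtain ⟨hp0, hp1⟩ := hp
  set k := H - 1 with hkdef
  have hkn : k < n := by omega
  have hHk : H = k + 1 := by omega
  set S : ℝ := ∑ i ∈ Finset.range k, π i with hSdef
  set t : ℝ := (p - S) / π k with htdef
  have hπk0 : 0 ≤ π k := hπ0 k hkn
  have hSp : S ≤ p := by
    rcases Nat.eq_zero_or_pos k with h0 | hpos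
    · rw [hSdef, h0]; simpa using hp0
    · exact le_of_lt (hHleast k hpos (by omega))
  have hpk : p ≤ S + π k := by
    rw [hSdef, ← Finset.sum_range_succ, ← hHk]; exact hHge
  -- case analysis on π k
  have hcase : (π k = 0 ∧ p = S ∧ t = 0) ∨ 0 < π k := by
    rcases eq_or_lt_of_le hπk0 with h | h
    · left
      have hpS : p = S := le_antisymm (by simpa [← h] using hpk) hSp
      refine ⟨h.symm, hpS, ?_⟩
      rw [htdef, hpS, sub_self, zero_div]
    · right; exact h
  have ht0 : 0 ≤ t := by
    rcases hcase with ⟨_, _, ht⟩ | hpos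
    · rw [ht]
    · exact div_nonneg (by linarith) (le_of_lt hpos)
  have ht1 : t ≤ 1 := by
    rcases hcase with ⟨_, _, ht⟩ | hpos
    · rw [ht]; norm_num
    · rw [htdef, div_le_one hpos]; linarith
  -- the optimal g
  set g0 : ℕ → ℝ := fun i => if i < k then 1 else if i = k then t else 0 with hg0def
  have key : ∀ f : ℕ → ℝ, ∑ i ∈ Finset.range n, f i * g0 i
      = (∑ i ∈ Finset.range k, f i) + f k * t := by
    intro f
    have hsplit : Finset.range n = Finset.range (k + 1) ∪ Finset.Ico (k + 1) n := by
      rw [Finset.range_eq_Ico, Finset.range_eq_Ico]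
      exact (Finset.Ico_union_Ico_eq_Ico (Nat.zero_le _) hkn).symm
    rw [hsplit, Finset.sum_union (by
      rw [Finset.range_eq_Ico]
      exact Finset.Ico_disjoint_Ico_consecutive 0 (k+1) n)]
    have h2 : ∑ i ∈ Finset.Ico (k + 1) n, f i * g0 i = 0 := by
      apply Finset.sum_eq_zero
      intro i hi
      have : k + 1 ≤ i := (Finset.mem_Ico.mp hi).1
      simp only [hg0def]
      rw [if_neg (by omega), if_neg (by omega), mul_zero]
    rw [h2, add_zero, Finset.sum_range_succ]
    congr 1
    · apply Finset.sum_congr rfl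
      intro i hi
      have : i < k := Finset.mem_range.mp hi
      simp only [hg0def]
      rw [if_pos this, mul_one]
    · simp [hg0def]
  have hπkt : π k * t = p - S := by
    rcases hcase with ⟨h0, hpS, ht⟩ | hpos
    · rw [ht, mul_zero, hpS, sub_self]
    · rw [htdef]; field_simp
  have hpg : ∑ i ∈ Finset.range n, π i * g0 i = p := by
    rw [key π, hπkt, ← hSdef]; ring
  have hval : ∑ i ∈ Finset.range n, πb i * g0 i
      = ∑ i ∈ Finset.range k, πb i + (p - S) * πb k / π k := by
    rw [key πb]
    congr 1
    rcases hcase with ⟨h0, hpS, ht⟩ | hpos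
    · rw [ht, mul_zero, hpS, sub_self, zero_mul, zero_div]
    · rw [htdef]; field_simp
  constructor
  · -- membership
    refine ⟨g0, ?_, hpg, hval.symm⟩
    intro i hi
    simp only [hg0def]
    split_ifs
    · exact ⟨zero_le_one, le_refl 1⟩
    · exact ⟨ht0, ht1⟩
    · exact ⟨le_refl 0, zero_le_one⟩
  · -- lower bound
    rintro s ⟨g, hg01, hgp, rfl⟩
    rcases hcase with ⟨h0, hpS, ht⟩ | hpos
    · -- degenerate case: π k = 0 forces k = 0 and p = 0
      have hk0 : k = 0 := by
        by_contra hne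
        have := hHleast k (by omega) (by omega)
        rw [← hSdef] at this
        exact absurd hpS (by linarith)
      have hp00 : p = 0 := by
        rw [hpS, hSdef, hk0]; simp
      have hnn : 0 ≤ ∑ i ∈ Finset.range n, πb i * g i := by
        apply Finset.sum_nonneg
        intro i hi
        have hi' := Finset.mem_range.mp hi
        exact mul_nonneg (hπb0 i hi') (hg01 i hi').1
      have h1 : ∑ i ∈ Finset.range k, πb i = 0 := by rw [hk0]; simp
      have h2 : (p - S) * πb k / π k = 0 := by
        rw [hpS, sub_self, zero_mul, zero_div]
      rw [h1, h2, zero_add]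
      exact hnn
    · -- main case: π k > 0
      set a := π k with hadef
      set b := πb k with hbdef
      have hsum : 0 ≤ ∑ i ∈ Finset.range n, (a * πb i - b * π i) * (g i - g0 i) := by
        apply Finset.sum_nonneg
        intro i hi
        have hi' := Finset.mem_range.mp hi
        rcases lt_trichotomy i k with hik | hik | hik
        · have hfac : a * πb i - b * π i ≤ 0 := by
            have := hsorted i k hi' hkn (le_of_lt hik)
            rw [← hadef, ← hbdef] at this
            linarith [this]
          have hg1 : g i - g0 i ≤ 0 := by
            simp only [hg0def]
            rw [if_pos hik]
            linarith [(hg01 i hi').2]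
          nlinarith [hfac, hg1]
        · rw [hik]
          have h0 : a * πb k - b * π k = 0 := by rw [hadef, hbdef]; ring
          rw [h0, zero_mul]
        · have hfac : 0 ≤ a * πb i - b * π i := by
            have := hsorted k i hkn hi' (le_of_lt hik)
            rw [← hadef, ← hbdef] at this
            linarith [this]
          have hg1 : 0 ≤ g i - g0 i := by
            simp only [hg0def]
            rw [if_neg (by omega), if_neg (by omega)]
            linarith [(hg01 i hi').1]
          exact mul_nonneg hfac hg1
      have hexp : ∑ i ∈ Finset.range n, (a * πb i - b * π i) * (g i - g0 i)
          = a * (∑ i ∈ Finset.range n, πb i * g i)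
            - b * (∑ i ∈ Finset.range n, π i * g i)
            - a * (∑ i ∈ Finset.range n, πb i * g0 i)
            + b * (∑ i ∈ Finset.range n, π i * g0 i) := by
        rw [Finset.mul_sum, Finset.mul_sum, Finset.mul_sum, Finset.mul_sum,
          ← Finset.sum_sub_distrib, ← Finset.sum_sub_distrib, ← Finset.sum_add_distrib]
        apply Finset.sum_congr rfl
        intro i _
        ring
      rw [hexp, hgp, hpg, hval] at hsum
      have hfin : a * (∑ i ∈ Finset.range k, πb i + (p - S) * πb k / π k)
          ≤ a * (∑ i ∈ Finset.range n, πb i * g i) := by linarith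
      exact le_of_mul_le_mul_left hfin hpos
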